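/- Correlated equilibria of the single-item γ-hybrid auction without overbidding are efficient: Let γ ∈ (0,1], n ≥ 2, valuations v : Fin n → ℝ≥0. Let μ be a probability measure on bid profiles supported on no-overbidding profiles (b_i ≤ v_i for all i, μ-a.s.), with all utilities μ-integrable, satisfying the correlated equilibrium condition: for every bidder i and every measurable deviation map m_i : ℝ≥0 → ℝ≥0 with m_i(t) ≤ v_i for all t, E_{b∼μ}[u_i(b)] ≥ E_{b∼μ}[u_i(m_i(b_i), b_{−i})]. Then μ-almost surely the winner's valuation equals max_i v_i; in particular E_{b∼μ}[SW(b)] = max_i v_i. -/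

import Mathlib

open MeasureTheory
open scoped NNReal

namespace CEAuxP

def Aset (n : ℕ) (c : ℝ≥0) : Set (Fin n → ℝ≥0) := {b | ∀ j, b j < c}

lemma measurableSet_Aset (n : ℕ) (c : ℝ≥0) : MeasurableSet (Aset n c) := by
  have h : Aset n c = ⋂ j, (fun b : Fin n → ℝ≥0 => b j) ⁻¹' Set.Iio c := by
    ext b; simp [Aset]
  rw [h]
  exact MeasurableSet.iInter fun j => (measurable_pi_apply j) measurableSet_Iio

lemma Aset_mono {n : ℕ} {c d : ℝ≥0} (h : c ≤ d) : Aset n c ⊆ Aset n d :=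
  fun _ hb j => lt_of_lt_of_le (hb j) h

lemma measurable_fsup {n : ℕ} (s : Finset (Fin n)) :
    Measurable fun b : Fin n → ℝ≥0 => s.sup b := by
  induction s using Finset.cons_induction with
  | empty => simpa using measurable_const
  | cons a s ha ih =>
    have h : (fun b : Fin n → ℝ≥0 => (Finset.cons a s ha).sup b)
        = fun b => (b a) ⊔ (s.sup b) := by
      funext b; rw [Finset.sup_cons]
    rw [h]
    exact (measurable_pi_apply a).sup ih

section

variable {n : ℕ} {γ : ℝ} {v : Fin n → ℝ≥0} {w : (Fin n → ℝ≥0) → Fin n}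
  {u : Fin n → (Fin n → ℝ≥0) → ℝ} {μ : Measure (Fin n → ℝ≥0)}

lemma measurable_u (γ : ℝ) (v : Fin n → ℝ≥0) (w : (Fin n → ℝ≥0) → Fin n) (u : Fin n → (Fin n → ℝ≥0) → ℝ) (hwmeas : Measurable w)
    (hu : ∀ i b, u i b =
      if i = w b then
        (v (w b) : ℝ) - (γ * (b (w b) : ℝ)
          + (1 - γ) * (((Finset.univ.erase (w b)).sup b : ℝ≥0) : ℝ))
      else 0) (i : Fin n) : Measurable (u i) := by
  classical
  have hrepr : u i = fun b => ∑ k : Fin n,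
      Set.indicator (w ⁻¹' {k})
        (fun b => if i = k then
          (v k : ℝ) - (γ * (b k : ℝ)
            + (1 - γ) * (((Finset.univ.erase k).sup b : ℝ≥0) : ℝ)) else 0) b := by
    funext b
    rw [hu i b, Finset.sum_eq_single (w b)]
    · rw [Set.indicator_of_mem (by simp : b ∈ w ⁻¹' {w b})]
    · intro k _ hk
      rw [Set.indicator_of_notMem (by simpa using fun h : w b = k => hk h.symm)]
    · exact fun h => absurd (Finset.mem_univ _) h
  rw [hrepr]
  apply Finset.measurable_sum
  intro k _
  apply Measurable.indicator _ (hwmeas (measurableSet_singleton k))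
  by_cases hik : i = k
  · simp only [if_pos hik]
    exact measurable_const.sub
      (((measurable_coe_nnreal_real.comp (measurable_pi_apply k)).const_mul γ).add
        ((measurable_coe_nnreal_real.comp (measurable_fsup _)).const_mul (1 - γ)))
  · simp only [if_neg hik]; exact measurable_const

lemma abs_u_le (γ : ℝ) (v : Fin n → ℝ≥0) (w : (Fin n → ℝ≥0) → Fin n) (u : Fin n → (Fin n → ℝ≥0) → ℝ) (hγ0 : 0 < γ) (hγ1 : γ ≤ 1)
    (hw : ∀ b, (∀ i, b i ≤ b (w b)) ∧ ∀ i, b i = b (w b) → w b ≤ i)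
    (hu : ∀ i b, u i b =
      if i = w b then
        (v (w b) : ℝ) - (γ * (b (w b) : ℝ)
          + (1 - γ) * (((Finset.univ.erase (w b)).sup b : ℝ≥0) : ℝ))
      else 0) (i : Fin n) (b : Fin n → ℝ≥0)
    (hb : ∀ j, b j ≤ Finset.univ.sup v) :
    |u i b| ≤ ((Finset.univ.sup v : ℝ≥0) : ℝ) := by
  classical
  rw [hu]
  split_ifs with h
  · set V : ℝ≥0 := Finset.univ.sup v with hV
    have h1 : (v (w b) : ℝ) ≤ (V : ℝ) := by
      exact_mod_cast Finset.le_sup (Finset.mem_univ (w b))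
    have h2 : (b (w b) : ℝ) ≤ (V : ℝ) := by exact_mod_cast hb _
    have h3 : (((Finset.univ.erase (w b)).sup b : ℝ≥0) : ℝ) ≤ (V : ℝ) := by
      exact_mod_cast Finset.sup_le fun j _ => hb j
    have h4 : (0:ℝ) ≤ (b (w b) : ℝ) := NNReal.coe_nonneg _
    have h5 : (0:ℝ) ≤ (((Finset.univ.erase (w b)).sup b : ℝ≥0) : ℝ) := NNReal.coe_nonneg _
    have h6 : (0:ℝ) ≤ (v (w b) : ℝ) := NNReal.coe_nonneg _
    have h7 : (0:ℝ) ≤ 1 - γ := by linarith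
    rw [abs_le]
    constructor
    · nlinarith [mul_le_mul_of_nonneg_left h2 hγ0.le, mul_le_mul_of_nonneg_left h3 h7,
        mul_nonneg hγ0.le h4, mul_nonneg h7 h5]
    · nlinarith [mul_nonneg hγ0.le h4, mul_nonneg h7 h5]
  · rw [abs_zero]; exact NNReal.coe_nonneg _

/-- Core correlated-equilibrium inequality from the deviation `t ↦ min (max t c) (v k)`. -/
lemma key [IsProbabilityMeasure μ]
    (hγ0 : 0 < γ) (hγ1 : γ ≤ 1)
    (hwmeas : Measurable w)
    (hw : ∀ b, (∀ i, b i ≤ b (w b)) ∧ ∀ i, b i = b (w b) → w b ≤ i)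
    (hu : ∀ i b, u i b =
      if i = w b then
        (v (w b) : ℝ) - (γ * (b (w b) : ℝ)
          + (1 - γ) * (((Finset.univ.erase (w b)).sup b : ℝ≥0) : ℝ))
      else 0)
    (humeas : ∀ i, Measurable (u i))
    (huabs : ∀ (i : Fin n) (b : Fin n → ℝ≥0), (∀ j, b j ≤ Finset.univ.sup v) →
      |u i b| ≤ ((Finset.univ.sup v : ℝ≥0) : ℝ))
    (hNOB : ∀ᵐ b ∂μ, ∀ i, b i ≤ v i)
    (hIntu : ∀ i, Integrable (u i) μ)
    (hCE : ∀ i (m : ℝ≥0 → ℝ≥0), Measurable m → (∀ t, m t ≤ v i) →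
      ∫ b, u i (Function.update b i (m (b i))) ∂μ ≤ ∫ b, u i b ∂μ)
    (k : Fin n) (c lam : ℝ≥0) (hlc : lam ≤ c) (hcv : c ≤ v k)
    (hlam : μ (Aset n lam) = 0) :
    ((v k : ℝ) - (c : ℝ)) * (μ (Aset n c \ {b | w b = k})).toReal
      ≤ γ * (((c : ℝ) - (lam : ℝ)) * (μ (Aset n c ∩ {b | w b = k})).toReal) := by
  classical
  set Wk : Set (Fin n → ℝ≥0) := {b | w b = k} with hWkdef
  have hWmeasK : MeasurableSet Wk := hwmeas (measurableSet_singleton k)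
  have hAmeasC : MeasurableSet (Aset n c) := measurableSet_Aset n c
  set m : ℝ≥0 → ℝ≥0 := fun t => min (max t c) (v k) with hmdef
  have hmmeas : Measurable m := (measurable_id.max measurable_const).min measurable_const
  have hmle : ∀ t, m t ≤ v k := fun t => min_le_right _ _
  set f : (Fin n → ℝ≥0) → ℝ := fun b => u k (Function.update b k (m (b k))) with hfdef
  have hce : ∫ b, f b ∂μ ≤ ∫ b, u k b ∂μ := hCE k m hmmeas hmle
  -- pointwise claims
  have claimW : ∀ b, (∀ i, b i ≤ v i) → w b = k →
      f b = u k b - γ * max ((c:ℝ) - (b k : ℝ)) 0 := by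
    intro b hb hwb
    have hmbk : m (b k) = max (b k) c := by
      simp only [hmdef]; exact min_eq_left (max_le (hb k) hcv)
    have hkk : Function.update b k (m (b k)) k = max (b k) c := by
      rw [Function.update_self, hmbk]
    have hoff : ∀ j, j ≠ k → Function.update b k (m (b k)) j = b j :=
      fun j hj => Function.update_of_ne hj _ _
    set b' := Function.update b k (m (b k)) with hb'def
    have hwb' : w b' = k := by
      by_contra hne
      have h1 : b' k ≤ b' (w b') := (hw b').1 k
      have h2 : b' (w b') = b (w b') := hoff _ hne
      have h3 : b (w b') ≤ b k := by
        have := (hw b).1 (w b'); rwa [hwb] at this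
      have h4 : b k ≤ b' k := by rw [hkk]; exact le_max_left _ _
      have e0 : b' k = b' (w b') := le_antisymm h1 (by rw [h2]; exact h3.trans h4)
      have e2 : w b' ≤ k := (hw b').2 k e0
      have e1 : b (w b') = b k := le_antisymm h3 (h4.trans (h1.trans_eq h2))
      have e3 : k ≤ w b' := by
        have := (hw b).2 (w b') (by rw [e1, hwb])
        rwa [hwb] at this
      exact hne (le_antisymm e2 e3)
    have hsupeq : (Finset.univ.erase k).sup b' = (Finset.univ.erase k).sup b :=
      Finset.sup_congr rfl (fun j hj => hoff j (Finset.ne_of_mem_erase hj))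
    have hmax : ((max (b k) c : ℝ≥0) : ℝ) = (b k : ℝ) + max ((c:ℝ) - (b k:ℝ)) 0 := by
      rcases le_total (b k) c with h | h
      · have hc := NNReal.coe_le_coe.2 h
        rw [max_eq_right h, max_eq_left (by linarith)]; ring
      · have hc := NNReal.coe_le_coe.2 h
        rw [max_eq_left h, max_eq_right (by linarith)]; ring
    show u k b' = _
    rw [hu k b', hu k b, hwb', hwb, if_pos rfl, if_pos rfl, hsupeq, hkk, hmax]
    ring
  have claimL0 : ∀ b, (∀ i, b i ≤ v i) → 0 ≤ f b := by
    intro b hb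
    set b' := Function.update b k (m (b k)) with hb'def
    show 0 ≤ u k b'
    rw [hu k b']
    split_ifs with h
    · rw [← h]
      have h1 : (b' k : ℝ) ≤ (v k : ℝ) := by
        rw [hb'def, Function.update_self]; exact_mod_cast hmle _
      have h2 : (((Finset.univ.erase k).sup b' : ℝ≥0) : ℝ) ≤ (v k : ℝ) := by
        have := Finset.sup_le (s := Finset.univ.erase k) (fun j _ => (hw b').1 j)
        rw [← h] at this
        exact_mod_cast le_trans this (by rw [hb'def, Function.update_self]; exact hmle _)
      have h4 : (0:ℝ) ≤ (b' k : ℝ) := NNReal.coe_nonneg _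
      have h5 : (0:ℝ) ≤ (((Finset.univ.erase k).sup b' : ℝ≥0) : ℝ) := NNReal.coe_nonneg _
      nlinarith [mul_le_mul_of_nonneg_left h1 hγ0.le,
        mul_le_mul_of_nonneg_left h2 (by linarith : (0:ℝ) ≤ 1 - γ)]
    · exact le_rfl
  have claimA : ∀ b, (∀ i, b i ≤ v i) → (∀ j, b j < c) → w b ≠ k →
      (v k:ℝ) - (c:ℝ) ≤ f b := by
    intro b hb hAc hwb
    have hmbk : m (b k) = c := by
      simp only [hmdef]; rw [max_eq_right (hAc k).le, min_eq_left hcv]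
    set b' := Function.update b k (m (b k)) with hb'def
    have hkk : b' k = c := by rw [hb'def, Function.update_self, hmbk]
    have hoff : ∀ j, j ≠ k → b' j = b j := fun j hj => Function.update_of_ne hj _ _
    have hwb' : w b' = k := by
      by_contra hne
      have h1 : b' k ≤ b' (w b') := (hw b').1 k
      rw [hkk, hoff _ hne] at h1
      exact absurd h1 (not_le.2 (hAc _))
    have hsl : (((Finset.univ.erase k).sup b' : ℝ≥0) : ℝ) ≤ (c : ℝ) := by
      exact_mod_cast Finset.sup_le fun j hj => by
        rw [hoff j (Finset.ne_of_mem_erase hj)]; exact (hAc j).le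
    show (v k:ℝ) - (c:ℝ) ≤ u k b'
    rw [hu k b', hwb', if_pos rfl, hkk]
    have := mul_le_mul_of_nonneg_left hsl (by linarith : (0:ℝ) ≤ 1 - γ)
    linarith
  have claimZ : ∀ b, w b ≠ k → u k b = 0 := fun b hb => by
    rw [hu, if_neg (fun h => hb h.symm)]
  -- integrability
  set φ : (Fin n → ℝ≥0) → ℝ := fun b => max ((c:ℝ) - (b k : ℝ)) 0 with hφdef
  have hφmeas : Measurable φ :=
    (measurable_const.sub (measurable_coe_nnreal_real.comp (measurable_pi_apply k))).max
      measurable_const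
  have hφbound : ∀ b, ‖φ b‖ ≤ (c:ℝ) := by
    intro b
    have h0 : (0:ℝ) ≤ φ b := le_max_right _ _
    rw [Real.norm_eq_abs, abs_of_nonneg h0]
    exact max_le (by have := NNReal.coe_nonneg (b k); linarith) (NNReal.coe_nonneg c)
  have hφint : Integrable φ μ :=
    Integrable.mono' (integrable_const (c:ℝ)) hφmeas.aestronglyMeasurable
      (Filter.Eventually.of_forall hφbound)
  have hfmeas : Measurable f := by
    have hin : Measurable fun b : Fin n → ℝ≥0 => Function.update b k (m (b k)) := by
      apply measurable_pi_lambda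
      intro j
      by_cases hj : j = k
      · subst hj
        simp only [Function.update_self]
        exact hmmeas.comp (measurable_pi_apply j)
      · simp only [Function.update_of_ne hj]
        exact measurable_pi_apply j
    exact (humeas k).comp hin
  have hvV : ∀ j, v j ≤ Finset.univ.sup v := fun j => Finset.le_sup (Finset.mem_univ j)
  have hfint : Integrable f μ := by
    apply Integrable.mono' (integrable_const ((Finset.univ.sup v : ℝ≥0) : ℝ))
      hfmeas.aestronglyMeasurable
    filter_upwards [hNOB] with b hb
    rw [Real.norm_eq_abs]
    apply huabs
    intro j
    by_cases hj : j = k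
    · subst hj; rw [Function.update_self]; exact (hmle _).trans (hvV j)
    · rw [Function.update_of_ne hj]; exact (hb j).trans (hvV j)
  have hg1int : Integrable ((Aset n c \ Wk).indicator fun _ => (v k:ℝ) - (c:ℝ)) μ :=
    (integrable_const _).indicator (hAmeasC.diff hWmeasK)
  have hg2int : Integrable (Wk.indicator fun b => u k b - γ * φ b) μ :=
    ((hIntu k).sub (hφint.const_mul γ)).indicator hWmeasK
  set g : (Fin n → ℝ≥0) → ℝ := fun b =>
      ((Aset n c \ Wk).indicator fun _ => (v k:ℝ) - (c:ℝ)) b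
      + (Wk.indicator fun b => u k b - γ * φ b) b with hgdef
  have hgint : Integrable g μ := hg1int.add hg2int
  have hgf : g ≤ᵐ[μ] f := by
    filter_upwards [hNOB] with b hb
    show ((Aset n c \ Wk).indicator fun _ => (v k:ℝ) - (c:ℝ)) b
      + (Wk.indicator fun b => u k b - γ * φ b) b ≤ f b
    by_cases hwb : w b = k
    · have hmem : b ∈ Wk := hwb
      rw [Set.indicator_of_notMem (fun hm => hm.2 hmem), Set.indicator_of_mem hmem,
        claimW b hb hwb]
      simp [hφdef]
    · have hnm : b ∉ Wk := hwb
      rw [Set.indicator_of_notMem hnm, add_zero]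
      by_cases hac : ∀ j, b j < c
      · have hmem : b ∈ Aset n c \ Wk := ⟨hac, hnm⟩
        rw [Set.indicator_of_mem hmem]
        exact claimA b hb hac hwb
      · rw [Set.indicator_of_notMem (fun hm => hac hm.1)]
        exact claimL0 b hb
  have hIg : ∫ b, g b ∂μ ≤ ∫ b, f b ∂μ := integral_mono_ae hgint hfint hgf
  have hufk : ∫ b, u k b ∂μ = ∫ b in Wk, u k b ∂μ := by
    rw [← integral_indicator hWmeasK]
    congr 1
    funext b
    by_cases hwb : w b = k
    · have hmem : b ∈ Wk := hwb
      exact (Set.indicator_of_mem hmem _).symm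
    · have hmem : b ∉ Wk := hwb
      rw [Set.indicator_of_notMem hmem, claimZ b hwb]
  have hIg_eq : ∫ b, g b ∂μ = ((v k:ℝ) - (c:ℝ)) * (μ (Aset n c \ Wk)).toReal
      + (∫ b in Wk, u k b ∂μ - γ * ∫ b in Wk, φ b ∂μ) := by
    show ∫ b, (((Aset n c \ Wk).indicator fun _ => (v k:ℝ) - (c:ℝ)) b
      + (Wk.indicator fun b => u k b - γ * φ b) b) ∂μ = _
    rw [integral_add hg1int hg2int]
    congr 1
    · rw [integral_indicator_const _ (hAmeasC.diff hWmeasK), smul_eq_mul, mul_comm, measureReal_def]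
    · rw [integral_indicator hWmeasK,
        integral_sub ((hIntu k).integrableOn) ((hφint.const_mul γ).integrableOn),
        integral_const_mul]
  have hstep1 : ((v k:ℝ) - (c:ℝ)) * (μ (Aset n c \ Wk)).toReal
      ≤ γ * ∫ b in Wk, φ b ∂μ := by
    rw [hIg_eq] at hIg
    rw [hufk] at hce
    linarith
  have hstep2 : ∫ b in Wk, φ b ∂μ ≤ ((c:ℝ) - (lam:ℝ)) * (μ (Aset n c ∩ Wk)).toReal := by
    have hrhs : ∫ b, ((Aset n c ∩ Wk).indicator fun _ => (c:ℝ) - (lam:ℝ)) b ∂μ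
        = ((c:ℝ)-(lam:ℝ)) * (μ (Aset n c ∩ Wk)).toReal := by
      rw [integral_indicator_const _ (hAmeasC.inter hWmeasK), smul_eq_mul, mul_comm, measureReal_def]
    rw [← integral_indicator hWmeasK, ← hrhs]
    apply integral_mono_ae (hφint.indicator hWmeasK)
      ((integrable_const _).indicator (hAmeasC.inter hWmeasK))
    have hlamae : ∀ᵐ b ∂μ, b ∉ Aset n lam := measure_eq_zero_iff_ae_notMem.1 hlam
    have hclam : (0:ℝ) ≤ (c:ℝ) - (lam:ℝ) := by
      have := NNReal.coe_le_coe.2 hlc; linarith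
    filter_upwards [hlamae] with b hbl
    by_cases hwb : w b = k
    · have hmemW : b ∈ Wk := hwb
      rw [Set.indicator_of_mem hmemW]
      by_cases hbk : b k < c
      · have hmem : b ∈ Aset n c ∩ Wk := by
          refine ⟨fun j => lt_of_le_of_lt ?_ hbk, hwb⟩
          have := (hw b).1 j; rwa [hwb] at this
        rw [Set.indicator_of_mem hmem]
        have hbk_ge : lam ≤ b k := by
          have hex : ∃ j, ¬ b j < lam := by
            by_contra hcon
            push_neg at hcon
            exact hbl (fun j => hcon j)
          obtain ⟨j, hj⟩ := hex
          have h1 : lam ≤ b j := not_lt.1 hj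
          have h2 : b j ≤ b k := by
            have := (hw b).1 j; rwa [hwb] at this
          exact h1.trans h2
        apply max_le _ hclam
        have := NNReal.coe_le_coe.2 hbk_ge
        linarith
      · have h0 : φ b = 0 := by
          apply max_eq_right
          have := NNReal.coe_le_coe.2 (not_lt.1 hbk)
          linarith
        rw [h0]
        exact Set.indicator_nonneg (fun _ _ => hclam) b
    · have hmemW : b ∉ Wk := hwb
      rw [Set.indicator_of_notMem hmemW]
      exact Set.indicator_nonneg (fun _ _ => hclam) b
  calc ((v k : ℝ) - (c : ℝ)) * (μ (Aset n c \ Wk)).toReal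
      ≤ γ * ∫ b in Wk, φ b ∂μ := hstep1
    _ ≤ γ * (((c : ℝ) - (lam : ℝ)) * (μ (Aset n c ∩ Wk)).toReal) :=
        mul_le_mul_of_nonneg_left hstep2 hγ0.le

set_option maxHeartbeats 1000000 in
theorem main [IsProbabilityMeasure μ]
    (hγ0 : 0 < γ) (hγ1 : γ ≤ 1) (hn : 2 ≤ n)
    (hwmeas : Measurable w)
    (hw : ∀ b, (∀ i, b i ≤ b (w b)) ∧ ∀ i, b i = b (w b) → w b ≤ i)
    (hu : ∀ i b, u i b =
      if i = w b then
        (v (w b) : ℝ) - (γ * (b (w b) : ℝ)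
          + (1 - γ) * (((Finset.univ.erase (w b)).sup b : ℝ≥0) : ℝ))
      else 0)
    (hNOB : ∀ᵐ b ∂μ, ∀ i, b i ≤ v i)
    (hIntu : ∀ i, Integrable (u i) μ)
    (hCE : ∀ i (m : ℝ≥0 → ℝ≥0), Measurable m → (∀ t, m t ≤ v i) →
      ∫ b, u i (Function.update b i (m (b i))) ∂μ ≤ ∫ b, u i b ∂μ)
    (key : ∀ (k : Fin n) (c lam : ℝ≥0), lam ≤ c → c ≤ v k →
      μ (Aset n lam) = 0 →
      ((v k : ℝ) - (c : ℝ)) * (μ (Aset n c \ {b | w b = k})).toReal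
        ≤ γ * (((c : ℝ) - (lam : ℝ)) * (μ (Aset n c ∩ {b | w b = k})).toReal)) :
    (∀ᵐ b ∂μ, v (w b) = Finset.univ.sup v) ∧
    ∫ b, (v (w b) : ℝ) ∂μ = ((Finset.univ.sup v : ℝ≥0) : ℝ) := by
  classical
  obtain ⟨istar, -, histar⟩ := Finset.exists_mem_eq_sup (Finset.univ : Finset (Fin n))
    ⟨⟨0, by omega⟩, Finset.mem_univ _⟩ v
  have hne_erase : (Finset.univ.erase istar).Nonempty := by
    rw [← Finset.card_pos, Finset.card_erase_of_mem (Finset.mem_univ _)]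
    simp only [Finset.card_univ, Fintype.card_fin]
    omega
  obtain ⟨khat, hkmem, hkeq⟩ := Finset.exists_mem_eq_sup _ hne_erase v
  have hkne : khat ≠ istar := (Finset.mem_erase.1 hkmem).1
  set V : ℝ≥0 := Finset.univ.sup v with hV
  set v2 : ℝ≥0 := (Finset.univ.erase istar).sup v with hv2
  have hv2V : v2 ≤ V := Finset.sup_mono (Finset.erase_subset _ _)
  have hv2k : v2 ≤ v khat := le_of_eq hkeq
  have hv2i : v2 ≤ v istar := hv2V.trans (le_of_eq histar)
  have hvlev2 : ∀ j, j ≠ istar → v j ≤ v2 := fun j hj =>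
    Finset.le_sup (Finset.mem_erase.2 ⟨hj, Finset.mem_univ j⟩)
  have hA0 : μ (Aset n 0) = 0 := by
    have h : Aset n 0 = (∅ : Set (Fin n → ℝ≥0)) :=
      Set.eq_empty_iff_forall_notMem.2 fun b hb => by
        have := hb ⟨0, by omega⟩; simp at this
    rw [h, measure_empty]
  have hbadnull : μ {b | ¬ ∀ i, b i ≤ v i} = 0 := ae_iff.1 hNOB
  -- Step 1: a.s. the winning bid is at least v2
  have hAv2 : μ (Aset n v2) = 0 := by
    set S : Set ℝ≥0 := {lam | lam ≤ v2 ∧ μ (Aset n lam) = 0} with hS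
    have h0S : (0:ℝ≥0) ∈ S := ⟨zero_le, hA0⟩
    have hbddS : BddAbove S := ⟨v2, fun x hx => hx.1⟩
    set s := sSup S with hs
    have hsv2 : s ≤ v2 := csSup_le ⟨0, h0S⟩ fun x hx => hx.1
    have hsA : μ (Aset n s) = 0 := by
      by_cases hs0 : s = 0
      · rw [hs0]; exact hA0
      · have hsub : Aset n s ⊆ ⋃ q : ℚ,
            (if Real.toNNReal (q:ℝ) < s then Aset n (Real.toNNReal (q:ℝ)) else ∅) := by
          intro b hb
          have hM : Finset.univ.sup b < s := by
            rw [Finset.sup_lt_iff (bot_lt_iff_ne_bot.2 hs0)]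
            exact fun j _ => hb j
          obtain ⟨q, hq1, hq2⟩ := exists_rat_btwn (NNReal.coe_lt_coe.2 hM)
          have hq0 : (0:ℝ) ≤ (q:ℝ) := le_trans (NNReal.coe_nonneg _) hq1.le
          have hqs : Real.toNNReal (q:ℝ) < s := by
            rw [← NNReal.coe_lt_coe, Real.coe_toNNReal _ hq0]; exact hq2
          refine Set.mem_iUnion.2 ⟨q, ?_⟩
          rw [if_pos hqs]
          intro j
          have h1 : b j ≤ Finset.univ.sup b := Finset.le_sup (Finset.mem_univ j)
          refine lt_of_le_of_lt h1 ?_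
          rw [← NNReal.coe_lt_coe, Real.coe_toNNReal _ hq0]; exact hq1
        apply measure_mono_null hsub
        apply measure_iUnion_null
        intro q
        by_cases hq : Real.toNNReal (q:ℝ) < s
        · rw [if_pos hq]
          obtain ⟨x, hxS, hx⟩ := exists_lt_of_lt_csSup ⟨0, h0S⟩ hq
          exact measure_mono_null (Aset_mono hx.le) hxS.2
        · rw [if_neg hq]; exact measure_empty
    rcases eq_or_lt_of_le hsv2 with heq | hlt
    · rwa [heq] at hsA
    · exfalso
      have hpos : (0:ℝ≥0) < v2 - s := tsub_pos_of_lt hlt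
      set d : ℝ≥0 := (v2 - s) / 4 with hd
      have hdpos : 0 < d := by
        rw [hd]; exact div_pos hpos (by norm_num)
      set c : ℝ≥0 := s + d with hc
      have hcv2 : c ≤ v2 := by
        rw [hc]
        calc s + d ≤ s + (v2 - s) := by
              refine add_le_add_right ?_ s
              rw [hd]; exact div_le_self zero_le (by norm_num)
          _ = v2 := add_tsub_cancel_of_le hsv2
      have hcoe : (c:ℝ) = (s:ℝ) + ((v2:ℝ) - (s:ℝ))/4 := by
        rw [hc, hd]
        push_cast [NNReal.coe_sub hsv2]
        ring
      have h1 := key istar c s (le_add_right le_rfl) (hcv2.trans hv2i) hsA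
      have h2 := key khat c s (le_add_right le_rfl) (hcv2.trans hv2k) hsA
      set Wi : Set (Fin n → ℝ≥0) := {b | w b = istar} with hWi
      set Wh : Set (Fin n → ℝ≥0) := {b | w b = khat} with hWh
      have hWimeas : MeasurableSet Wi := hwmeas (measurableSet_singleton istar)
      have hWhmeas : MeasurableSet Wh := hwmeas (measurableSet_singleton khat)
      set a : ℝ := (μ (Aset n c)).toReal with ha
      set xi : ℝ := (μ (Aset n c \ Wi)).toReal with hxi
      set xk : ℝ := (μ (Aset n c \ Wh)).toReal with hxk
      set yi : ℝ := (μ (Aset n c ∩ Wi)).toReal with hyi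
      set yk : ℝ := (μ (Aset n c ∩ Wh)).toReal with hyk
      clear_value a xi xk yi yk
      have ha_le : a ≤ xi + xk := by
        have hsubU : Aset n c ⊆ (Aset n c \ Wi) ∪ (Aset n c \ Wh) := by
          intro b hb
          by_cases hbi : w b = istar
          · exact Or.inr ⟨hb, fun h => hkne ((h : w b = khat).symm.trans hbi)⟩
          · exact Or.inl ⟨hb, hbi⟩
        have hm : μ (Aset n c) ≤ μ (Aset n c \ Wi) + μ (Aset n c \ Wh) :=
          (measure_mono hsubU).trans (measure_union_le _ _)
        have h3 := ENNReal.toReal_mono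
          (ENNReal.add_ne_top.2 ⟨measure_ne_top μ _, measure_ne_top μ _⟩) hm
        rw [ENNReal.toReal_add (measure_ne_top μ _) (measure_ne_top μ _)] at h3
        rw [ha, hxi, hxk]; exact h3
      have hy_le : yi + yk ≤ a := by
        have hdisj : Disjoint (Aset n c ∩ Wi) (Aset n c ∩ Wh) := by
          rw [Set.disjoint_left]
          intro b hb1 hb2
          exact hkne ((hb2.2 : w b = khat).symm.trans hb1.2)
        have hm : μ (Aset n c ∩ Wi) + μ (Aset n c ∩ Wh) ≤ μ (Aset n c) := by
          rw [← measure_union hdisj ((measurableSet_Aset n c).inter hWhmeas)]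
          exact measure_mono (Set.union_subset Set.inter_subset_left Set.inter_subset_left)
        have h3 := ENNReal.toReal_mono (measure_ne_top μ _) hm
        rw [ENNReal.toReal_add (measure_ne_top μ _) (measure_ne_top μ _)] at h3
        rw [hyi, hyk, ha]; exact h3
      set Δ : ℝ := (v2:ℝ) - (s:ℝ) with hΔdef
      have hΔ : 0 < Δ := by
        rw [hΔdef]; have := NNReal.coe_lt_coe.2 hlt; linarith
      have hcs : (c:ℝ) - (s:ℝ) = Δ/4 := by rw [hcoe, hΔdef]; ring
      have hv2c : (v2:ℝ) - (c:ℝ) = 3*Δ/4 := by rw [hcoe, hΔdef]; ring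
      have hvk' : (v khat : ℝ) = (v2:ℝ) := NNReal.coe_inj.2 hkeq.symm
      have hvi' : (v2:ℝ) ≤ (v istar : ℝ) := NNReal.coe_le_coe.2 hv2i
      have hxi0 : 0 ≤ xi := by rw [hxi]; exact ENNReal.toReal_nonneg
      have hxk0 : 0 ≤ xk := by rw [hxk]; exact ENNReal.toReal_nonneg
      have hyi0 : 0 ≤ yi := by rw [hyi]; exact ENNReal.toReal_nonneg
      have hyk0 : 0 ≤ yk := by rw [hyk]; exact ENNReal.toReal_nonneg
      have ha0 : 0 ≤ a := by rw [ha]; exact ENNReal.toReal_nonneg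
      -- chain
      have t1 : ((v2:ℝ) - c) * a ≤ ((v2:ℝ) - c) * (xi + xk) :=
        mul_le_mul_of_nonneg_left ha_le (by rw [hv2c]; positivity)
      have t2 : ((v2:ℝ) - c) * xi ≤ ((v istar:ℝ) - c) * xi :=
        mul_le_mul_of_nonneg_right (by linarith) hxi0
      have t3 : ((v2:ℝ) - c) * xk = ((v khat:ℝ) - c) * xk := by rw [hvk']
      have t5 : γ * (((c:ℝ) - s) * yi) + γ * (((c:ℝ) - s) * yk)
          ≤ γ * (((c:ℝ) - s) * a) := by
        have h := mul_le_mul_of_nonneg_left hy_le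
          (mul_nonneg hγ0.le (by rw [hcs]; positivity) : 0 ≤ γ * ((c:ℝ) - s))
        nlinarith [h]
      have t6 : γ * (((c:ℝ) - s) * a) ≤ ((c:ℝ) - s) * a := by
        have h0 : 0 ≤ ((c:ℝ) - s) * a := mul_nonneg (by rw [hcs]; positivity) ha0
        nlinarith
      have hfinal : (3*Δ/4) * a ≤ (Δ/4) * a := by
        calc (3*Δ/4) * a = ((v2:ℝ) - c) * a := by rw [hv2c]
          _ ≤ ((v2:ℝ) - c) * (xi + xk) := t1
          _ = ((v2:ℝ) - c) * xi + ((v2:ℝ) - c) * xk := by ring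
          _ ≤ ((v istar:ℝ) - c) * xi + ((v khat:ℝ) - c) * xk := by rw [t3] at *; linarith [t2]
          _ ≤ γ * (((c:ℝ) - s) * yi) + γ * (((c:ℝ) - s) * yk) := by linarith [h1, h2]
          _ ≤ γ * (((c:ℝ) - s) * a) := t5
          _ ≤ ((c:ℝ) - s) * a := t6
          _ = (Δ/4) * a := by rw [hcs]
      have haz : a = 0 := by nlinarith
      have hAc0 : μ (Aset n c) = 0 := by
        rw [ha] at haz
        rcases (ENNReal.toReal_eq_zero_iff _).1 haz with h | h
        · exact h
        · exact absurd h (measure_ne_top μ _)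
      have hcS : c ∈ S := ⟨hcv2, hAc0⟩
      have hle : c ≤ s := le_csSup hbddS hcS
      have hgt : s < c := lt_add_of_pos_right _ hdpos
      exact absurd hle (not_le.2 hgt)
  -- Step 2: the winner has the top valuation a.s.
  have hEnull : μ {b | v (w b) < V} = 0 := by
    by_cases hcase : v2 = V
    · have hsub : {b | v (w b) < V} ⊆ Aset n v2 ∪ {b | ¬ ∀ i, b i ≤ v i} := by
        intro b hb
        by_cases hgood : ∀ i, b i ≤ v i
        · left
          intro j
          have hj : b j < V := by
            calc b j ≤ b (w b) := (hw b).1 j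
              _ ≤ v (w b) := hgood _
              _ < V := hb
          rwa [hcase]
        · right; exact hgood
      refine le_antisymm ?_ zero_le
      calc μ {b | v (w b) < V} ≤ μ (Aset n v2) + μ {b | ¬ ∀ i, b i ≤ v i} :=
            (measure_mono hsub).trans (measure_union_le _ _)
        _ = 0 := by rw [hAv2, hbadnull, add_zero]
    · have hlt : v2 < V := lt_of_le_of_ne hv2V hcase
      by_contra hne
      have hpos : 0 < (μ {b | v (w b) < V}).toReal :=
        ENNReal.toReal_pos hne (measure_ne_top _ _)
      set ε : ℝ := (μ {b | v (w b) < V}).toReal with hε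
      set Δ : ℝ := (V:ℝ) - (v2:ℝ) with hΔdef
      have hΔ : 0 < Δ := by
        rw [hΔdef]; have := NNReal.coe_lt_coe.2 hlt; linarith
      set δ : ℝ := ε * Δ / (2 * (1 + ε)) with hδdef
      have hδpos : 0 < δ := by rw [hδdef]; positivity
      have hδeq : δ * (2 * (1 + ε)) = ε * Δ := by
        rw [hδdef]; field_simp
      have hδΔ : δ < Δ := by
        rw [hδdef, div_lt_iff₀ (by positivity)]
        nlinarith
      set c : ℝ≥0 := v2 + Real.toNNReal δ with hc
      have hcoe : (c:ℝ) = (v2:ℝ) + δ := by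
        rw [hc]; push_cast [Real.coe_toNNReal _ hδpos.le]; ring
      have hcV : c ≤ V := by
        rw [← NNReal.coe_le_coe, hcoe]; rw [hΔdef] at hδΔ; linarith
      have hkey := key istar c v2 (le_add_right le_rfl)
        (by rw [← histar]; exact hcV) hAv2
      rw [← histar] at hkey
      set x : ℝ := (μ (Aset n c \ {b | w b = istar})).toReal with hx
      set y : ℝ := (μ (Aset n c ∩ {b | w b = istar})).toReal with hy
      have hsub : {b | v (w b) < V} ⊆
          (Aset n c \ {b | w b = istar}) ∪ {b | ¬ ∀ i, b i ≤ v i} := by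
        intro b hb
        by_cases hgood : ∀ i, b i ≤ v i
        · left
          have hwne : w b ≠ istar := by
            intro h
            have hb' : v (w b) < V := hb
            rw [h, ← histar] at hb'
            exact lt_irrefl _ hb'
          refine ⟨?_, hwne⟩
          intro j
          have h1 : b j ≤ b (w b) := (hw b).1 j
          have h2 : b (w b) ≤ v (w b) := hgood _
          have h3 : v (w b) ≤ v2 := hvlev2 _ hwne
          have h4 : v2 < c := by
            rw [← NNReal.coe_lt_coe, hcoe]; linarith
          exact lt_of_le_of_lt (h1.trans (h2.trans h3)) h4
        · right; exact hgood
      have hmle' : μ {b | v (w b) < V} ≤ μ (Aset n c \ {b | w b = istar}) := by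
        calc μ {b | v (w b) < V}
            ≤ μ (Aset n c \ {b | w b = istar}) + μ {b | ¬ ∀ i, b i ≤ v i} :=
              (measure_mono hsub).trans (measure_union_le _ _)
          _ = μ (Aset n c \ {b | w b = istar}) := by rw [hbadnull, add_zero]
      have hxε : ε ≤ x := ENNReal.toReal_mono (measure_ne_top μ _) hmle'
      have hy1 : y ≤ 1 := by
        rw [hy]
        have h : μ (Aset n c ∩ {b | w b = istar}) ≤ 1 := prob_le_one
        have h2 := ENNReal.toReal_mono ENNReal.one_ne_top h
        simpa using h2
      have hy0 : 0 ≤ y := ENNReal.toReal_nonneg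
      have hx0 : 0 ≤ x := ENNReal.toReal_nonneg
      have hVc : (V:ℝ) - (c:ℝ) = Δ - δ := by rw [hcoe, hΔdef]; ring
      have hcv2' : (c:ℝ) - (v2:ℝ) = δ := by rw [hcoe]; ring
      rw [hVc, hcv2'] at hkey
      -- hkey : (Δ - δ) * x ≤ γ * (δ * y)
      have k1 : (Δ - δ) * ε ≤ (Δ - δ) * x :=
        mul_le_mul_of_nonneg_left hxε (by linarith)
      have k2 : γ * (δ * y) ≤ δ * y := by nlinarith [mul_nonneg hδpos.le hy0]
      have k2b : δ * y ≤ δ := by nlinarith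
      have k3 : γ * (δ * y) ≤ δ := k2.trans k2b
      nlinarith [mul_pos hpos hΔ, mul_nonneg hδpos.le hpos.le]
  have hae : ∀ᵐ b ∂μ, v (w b) = V := by
    have hsub : {b | ¬ v (w b) = V} ⊆ {b | v (w b) < V} := fun b hb =>
      lt_of_le_of_ne (Finset.le_sup (Finset.mem_univ _)) hb
    exact ae_iff.2 (le_antisymm ((measure_mono hsub).trans (le_of_eq hEnull)) zero_le)
  refine ⟨hae, ?_⟩
  have hae' : (fun b => (v (w b) : ℝ)) =ᵐ[μ] fun _ => (V:ℝ) :=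
    hae.mono fun b hb => by simp [hb]
  rw [integral_congr_ae hae']
  simp
end
end CEAuxP

/-- Correlated equilibria of the single-item γ-hybrid auction without overbidding are
efficient: μ-almost surely the winner's valuation equals `max_i v_i`, and hence the
expected social welfare equals `max_i v_i`.  Here `w b` is the highest bidder (ties to
the smallest index), the winner pays `γ·b_{w b} + (1-γ)·max_{j ≠ w b} b_j`, and a
correlated equilibrium is a probability measure `μ` supported on no-overbidding
profiles such that no bidder gains from any measurable no-overbidding deviation map. -/
theorem ce_efficient_single_item_hybrid
    (γ : ℝ) (hγ0 : 0 < γ) (hγ1 : γ ≤ 1) (n : ℕ) (hn : 2 ≤ n)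
    (v : Fin n → ℝ≥0)
    (w : (Fin n → ℝ≥0) → Fin n) (hwmeas : Measurable w)
    (hw : ∀ b, (∀ i, b i ≤ b (w b)) ∧ ∀ i, b i = b (w b) → w b ≤ i)
    (u : Fin n → (Fin n → ℝ≥0) → ℝ)
    (hu : ∀ i b, u i b =
      if i = w b then
        (v (w b) : ℝ) - (γ * (b (w b) : ℝ)
          + (1 - γ) * (((Finset.univ.erase (w b)).sup b : ℝ≥0) : ℝ))
      else 0)
    (μ : Measure (Fin n → ℝ≥0)) [IsProbabilityMeasure μ]
    (hNOB : ∀ᵐ b ∂μ, ∀ i, b i ≤ v i)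
    (hIntu : ∀ i, Integrable (u i) μ)
    (hCE : ∀ i (m : ℝ≥0 → ℝ≥0), Measurable m → (∀ t, m t ≤ v i) →
      ∫ b, u i (Function.update b i (m (b i))) ∂μ ≤ ∫ b, u i b ∂μ) :
    (∀ᵐ b ∂μ, v (w b) = Finset.univ.sup v) ∧
    ∫ b, (v (w b) : ℝ) ∂μ = ((Finset.univ.sup v : ℝ≥0) : ℝ) := by
  classical
  have humeas : ∀ i, Measurable (u i) := CEAuxP.measurable_u γ v w u hwmeas hu
  have huabs := CEAuxP.abs_u_le γ v w u hγ0 hγ1 hw hu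
  exact CEAuxP.main hγ0 hγ1 hn hwmeas hw hu hNOB hIntu hCE
    (fun k c lam hlc hcv hlam =>
      CEAuxP.key hγ0 hγ1 hwmeas hw hu humeas huabs hNOB hIntu hCE k c lam hlc hcv hlam)
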